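/- Fix m ∈ ℝ and let C₃(b) = (1-b₁²)b₂ - b₁²m² - b₃² on ℝ³. Define the functions q(b) = b₁ and p(b) = b₃/(1-b₁²) on the region b₁² ≠ 1. Then for every b ∈ ℝ³ with b₁² ≠ 1, the reduced Poisson bracket of q and p equals 1: ∇q(b) · ( ∇C₃(b) × ∇p(b) ) = 1. Hence (q,p) are canonical (symplectic) coordinates on the smooth part of the reduced phase space with respect to the reduced Poisson tensor ∇C₃^. -/

import Mathlib

noncomputable section

/-- The cross product in `ℝ³`. -/
def cross3 (v w : Fin 3 → ℝ) : Fin 3 → ℝ :=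
  ![v 1 * w 2 - v 2 * w 1, v 2 * w 0 - v 0 * w 2, v 0 * w 1 - v 1 * w 0]

/-- The dot product in `ℝ³`. -/
def dot3 (v w : Fin 3 → ℝ) : ℝ := v 0 * w 0 + v 1 * w 1 + v 2 * w 2

/-- `ℝ³` (`b`-space) as a Euclidean space. -/
abbrev E3 := EuclideanSpace ℝ (Fin 3)

/-- `C₃(b) = (1-b₁²)b₂ - b₁²m² - b₃²`. -/
def C3fun (m : ℝ) : E3 → ℝ := fun b =>
  (1 - (b 0) ^ 2) * b 1 - (b 0) ^ 2 * m ^ 2 - (b 2) ^ 2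

/-- `q(b) = b₁`. -/
def qfun : E3 → ℝ := fun b => b 0

/-- `p(b) = b₃/(1-b₁²)` (defined where `b₁² ≠ 1`). -/
def pfun : E3 → ℝ := fun b => b 2 / (1 - (b 0) ^ 2)

lemma grad_apply {f : E3 → ℝ} {L : E3 →L[ℝ] ℝ} {b : E3} (h : HasFDerivAt f L b) (i : Fin 3) :
    gradient f b i = L (EuclideanSpace.single i 1) := by
  have h1 : fderiv ℝ f b = L := h.fderiv
  rw [gradient, h1]
  have h2 : inner ℝ ((InnerProductSpace.toDual ℝ E3).symm L) (EuclideanSpace.single i (1:ℝ))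
      = L (EuclideanSpace.single i 1) := InnerProductSpace.toDual_symm_apply
  rw [← h2, real_inner_comm, EuclideanSpace.inner_single_left]
  simp

def pr (i : Fin 3) : E3 →L[ℝ] ℝ := EuclideanSpace.proj i

lemma pr_single (i j : Fin 3) : pr i (EuclideanSpace.single j 1) = if i = j then 1 else 0 := by
  simp [pr, EuclideanSpace.single_apply, eq_comm]

/-- On the smooth part `b₁² ≠ 1` of the reduced phase space, the reduced Poisson
bracket `{q,p}(b) = ∇q(b)·(∇C₃(b) × ∇p(b))` equals `1`, so `(q,p)` are canonical
coordinates for the reduced Poisson tensor `∇C₃^`. -/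
theorem qp_canonical (m : ℝ) (b : E3) (hb : (b 0) ^ 2 ≠ 1) :
    dot3 (fun i => gradient qfun b i)
      (cross3 (fun i => gradient (C3fun m) b i) (fun i => gradient pfun b i)) = 1 := by
  have hden : 1 - (b 0) ^ 2 ≠ 0 := fun h => hb (by linarith)
  have h0 : HasFDerivAt (fun b : E3 => b 0) (pr 0) b := (pr 0).hasFDerivAt
  have h1 : HasFDerivAt (fun b : E3 => b 1) (pr 1) b := (pr 1).hasFDerivAt
  have h2 : HasFDerivAt (fun b : E3 => b 2) (pr 2) b := (pr 2).hasFDerivAt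
  have hsq0 : HasFDerivAt (fun b : E3 => (b 0) ^ 2) ((b 0) • pr 0 + (b 0) • pr 0) b := by
    exact (h0.mul h0).congr_of_eventuallyEq (Filter.Eventually.of_forall fun x => by simp [pow_two])
  have hsq2 : HasFDerivAt (fun b : E3 => (b 2) ^ 2) ((b 2) • pr 2 + (b 2) • pr 2) b := by
    exact (h2.mul h2).congr_of_eventuallyEq (Filter.Eventually.of_forall fun x => by simp [pow_two])
  have hC := ((((hasFDerivAt_const (1:ℝ) b).sub hsq0).mul h1).sub
    (hsq0.mul_const (m ^ 2))).sub hsq2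
  have hsub : HasFDerivAt (fun b : E3 => 1 - (b 0) ^ 2) (0 - ((b 0) • pr 0 + (b 0) • pr 0)) b :=
    (hasFDerivAt_const (1:ℝ) b).sub hsq0
  have hinv : HasFDerivAt (fun b : E3 => (1 - (b 0) ^ 2)⁻¹)
      ((-((1 - (b 0) ^ 2) ^ 2)⁻¹) • (0 - ((b 0) • pr 0 + (b 0) • pr 0))) b :=
    (hasDerivAt_inv hden).comp_hasFDerivAt b hsub
  have hp : HasFDerivAt pfun
      ((b 2) • ((-((1 - (b 0) ^ 2) ^ 2)⁻¹) • (0 - ((b 0) • pr 0 + (b 0) • pr 0)))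
        + (1 - (b 0) ^ 2)⁻¹ • pr 2) b := by
    simp only [pfun, div_eq_mul_inv]
    exact h2.mul hinv
  have hC' : HasFDerivAt (C3fun m) _ b := hC
  have hq' : HasFDerivAt qfun (pr 0) b := h0
  have gq := fun i => grad_apply hq' i
  have gC := fun i => grad_apply hC' i
  have gp := fun i => grad_apply hp i
  simp only [dot3, cross3] at *
  rw [gq, gq, gq, gC, gC, gp, gp]
  simp only [ContinuousLinearMap.sub_apply, ContinuousLinearMap.add_apply,
    ContinuousLinearMap.smul_apply, ContinuousLinearMap.zero_apply, ContinuousLinearMap.coe_smul',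
    Pi.smul_apply, pr_single, smul_eq_mul]
  norm_num [Fin.ext_iff]
  field_simp
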